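/- Let {n} := s^n - s^{-n} in Q(s). For vectors a, b, y ∈ Z^2 with bilinear determinant form d(·,·), the quantum-integer identity {d(y,a)}{d(y+a,b)} + {d(b,y)}{d(b+y,a)} = -{d(a,b)}{d(a+b,y)} holds. -/

import Mathlib

/-- The quantum-integer identity
`{d(y,a)}{d(y+a,b)} + {d(b,y)}{d(b+y,a)} = -{d(a,b)}{d(a+b,y)}` in `ℚ(s)`. -/
theorem quantum_det_identity (a b y : ℤ × ℤ) :
    let s : RatFunc ℚ := RatFunc.X
    let d : ℤ × ℤ → ℤ × ℤ → ℤ := fun P Q => P.1 * Q.2 - P.2 * Q.1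
    let qint : ℤ → RatFunc ℚ := fun n => s ^ n - s ^ (-n)
    qint (d y a) * qint (d (y + a) b) + qint (d b y) * qint (d (b + y) a) =
      -(qint (d a b) * qint (d (a + b) y)) := by
  intro s d qint
  have hs : s ≠ 0 := RatFunc.X_ne_zero
  have key : ∀ A B C : ℤ,
      qint A * qint (B + C) + qint (-B) * qint (A - C) =
        -(qint C * qint (-(A + B))) := by
    intro A B C
    simp only [qint]
    field_simp [zpow_add₀ hs, zpow_sub₀ hs, zpow_neg]
    rw [← sub_eq_zero]
    simp only [mul_sub, sub_mul, ← zpow_add₀ hs]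
    ring_nf
  have h1 : d (y + a) b = d y b + d a b := by
    simp only [d, Prod.fst_add, Prod.snd_add]; ring
  have h2 : d b y = -(d y b) := by simp only [d]; ring
  have h3 : d (b + y) a = d y a - d a b := by
    simp only [d, Prod.fst_add, Prod.snd_add]; ring
  have h4 : d (a + b) y = -(d y a + d y b) := by
    simp only [d, Prod.fst_add, Prod.snd_add]; ring
  rw [h1, h2, h3, h4]
  exact key (d y a) (d y b) (d a b)
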